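/- Let V be a finite type, let r be a strict linear order on V, and let E : V → V → Prop be a relation satisfying E u v → r u v. Let f : V → Bool be a labeling of the vertices, and let C be a finite set of binary strings such that for every c ∈ C there exists a list p : List V with List.Chain' E p and List.map f p = c. Then there exists a binary string s of length Fintype.card V that is a common supersequence of C, i.e., every c ∈ C satisfies List.Sublist c s. In particular, the length of a shortest common supersequence of C is at most the number of states of any acyclic vertex-labeled DAG that outputs every string of C along some directed path. (This is the correctness of the paper's reduction from shortest common supersequence to 0-minimal AMM-restricted schematic construction, one direction of the proof of its Theorem on AMM-restriction hardness for unbounded streaming codes.) -/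

import Mathlib

/-- Reduction correctness (Theorem: AMM-restriction hardness, one direction):
if every string of a finite corpus `C` is output along some directed path of an
acyclic vertex-labeled DAG on vertex set `V`, then there is a common
supersequence of `C` of length `Fintype.card V`. -/
theorem dag_states_give_common_supersequence {V : Type*} [Fintype V] [LinearOrder V]
    (E : V → V → Prop) (hE : ∀ u v, E u v → u < v)
    (f : V → Bool) (C : Finset (List Bool))
    (hC : ∀ c ∈ C, ∃ p : List V, List.Chain' E p ∧ p.map f = c) :
    ∃ s : List Bool, s.length = Fintype.card V ∧ ∀ c ∈ C, c.Sublist s := by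
  set L := Finset.sort (Finset.univ : Finset V) (· ≤ ·) with hL
  refine ⟨L.map f, by simp [hL], ?_⟩
  intro c hc
  obtain ⟨p, hp, rfl⟩ := hC c hc
  refine List.Sublist.map f ?_
  have hlt : List.Chain' (· < ·) p := hp.imp (fun a b h => hE a b h)
  have hsorted : p.Pairwise (· ≤ ·) := (List.isChain_iff_pairwise.mp hlt).imp le_of_lt
  have hnd : p.Nodup := (List.isChain_iff_pairwise.mp hlt).imp ne_of_lt
  have hsub : List.Subperm p L := List.subperm_of_subset hnd (by
    intro x _; simp [hL])
  exact List.sublist_of_subperm_of_pairwise hsub hsorted (Finset.pairwise_sort _ _)
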